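/- (Existence of a good projection vector.) Let K be an infinite field (e.g. of characteristic zero), A an n×n matrix over K with characteristic polynomial factorization χ_A = f_1^{m_1}···f_q^{m_q} into pairwise distinct monic irreducible factors, g_p = χ_A / f_p^{m_p}, and for each j ∈ {1,…,n}, p ∈ {1,…,q}, let r_{j,p} be the multiplicity of f_p in π_{A,e_j}. Then there exists a row vector u ∈ K^n such that for every j and every p with r_{j,p} ≥ 1, the j-th entry of the row vector u·g_p(A)·f_p(A)^{r_{j,p}−1} is nonzero; consequently, for this u and for all j and p, the least natural number k such that the j-th entry of u·g_p(A)·f_p(A)^k is zero equals r_{j,p}, so the pseudo annihilating polynomial f_1^{ρ_{1,j}}···f_q^{ρ_{q,j}} determined by u equals π_{A,e_j} for every j. -/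
import Mathlib

open Polynomial Matrix

private lemma exists_dot_ne_zero {K : Type*} [Field K] [Infinite K] {n : ℕ}
    {ι : Type*} [Finite ι] (v : ι → (Fin n → K)) (hv : ∀ i, v i ≠ 0) :
    ∃ u : Fin n → K, ∀ i, u ⬝ᵥ v i ≠ 0 := by
  by_contra hcon
  push_neg at hcon
  set φ : ι → ((Fin n → K) →ₗ[K] K) := fun i =>
    { toFun := fun u => u ⬝ᵥ v i
      map_add' := fun a b => add_dotProduct a b (v i)
      map_smul' := fun c a => smul_dotProduct c a (v i) } with hφ
  have hcover : ⋃ i, ((LinearMap.ker (φ i) : Subspace K (Fin n → K)) : Set (Fin n → K))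
      = Set.univ := by
    ext u
    simp only [Set.mem_iUnion, Set.mem_univ, iff_true, SetLike.mem_coe, LinearMap.mem_ker]
    obtain ⟨i, hi⟩ := hcon u
    exact ⟨i, hi⟩
  obtain ⟨i, hi⟩ := Subspace.exists_eq_top_of_iUnion_eq_univ hcover
  apply hv i
  funext t
  have h1 : Pi.single t (1 : K) ∈ LinearMap.ker (φ i) := hi ▸ Submodule.mem_top
  have h2 : Pi.single t (1 : K) ⬝ᵥ v i = 0 := h1
  simpa [single_dotProduct] using h2

private lemma pi_eq_prod_pows {K : Type*} [Field K] {q : ℕ}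
    (f : Fin q → K[X]) (hfmonic : ∀ p, (f p).Monic) (hfirr : ∀ p, Irreducible (f p))
    (hfdist : Function.Injective f)
    (π : K[X]) (hπmonic : π.Monic) (m : Fin q → ℕ)
    (hdvd : π ∣ ∏ p, f p ^ m p)
    (r : Fin q → ℕ)
    (hr : ∀ p, f p ^ r p ∣ π ∧ ¬ f p ^ (r p + 1) ∣ π) :
    π = ∏ p, f p ^ r p ∧ ∀ p, r p ≤ m p := by
  have hfne : ∀ p, f p ≠ 0 := fun p => (hfmonic p).ne_zero
  have hnd : ∀ p t : Fin q, p ≠ t → ¬ f p ∣ f t := by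
    intro p t hpt hd
    exact hpt (hfdist (Polynomial.eq_of_monic_of_associated (hfmonic p) (hfmonic t)
      ((hfirr p).associated_of_dvd (hfirr t) hd)))
  have hprime : ∀ p, Prime (f p) := fun p => (hfirr p).prime
  have hcp : ∀ p t : Fin q, p ≠ t → IsCoprime (f p) (f t) := fun p t h =>
    (hfirr p).coprime_iff_not_dvd.mpr (hnd p t h)
  have hprodmonic : (∏ p, f p ^ r p).Monic :=
    Polynomial.monic_prod_of_monic _ _ (fun p _ => (hfmonic p).pow _)
  have hprod_dvd : (∏ p, f p ^ r p) ∣ π := by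
    apply Finset.prod_dvd_of_coprime
    · intro p _ t _ hpt
      exact ((hcp p t hpt).pow : IsCoprime (f p ^ r p) (f t ^ r t))
    · exact fun p _ => (hr p).1
  obtain ⟨h, hh⟩ := hprod_dvd
  have hπne : π ≠ 0 := hπmonic.ne_zero
  have hhne : h ≠ 0 := by
    rintro rfl
    rw [mul_zero] at hh
    exact hπne hh
  have hunit : IsUnit h := by
    by_contra hu
    obtain ⟨w, hwirr, hwdvd⟩ := WfDvdMonoid.exists_irreducible_factor hu hhne
    have hwp : Prime w := hwirr.prime
    have hwπ : w ∣ ∏ p, f p ^ m p :=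
      dvd_trans (dvd_trans hwdvd (Dvd.intro_left _ hh.symm)) hdvd
    obtain ⟨t, _, hwt⟩ := hwp.exists_mem_finset_dvd hwπ
    have hwft : w ∣ f t := hwp.dvd_of_dvd_pow hwt
    have hftw : Associated w (f t) := hwirr.associated_of_dvd (hfirr t) hwft
    have hfth : f t ∣ h := hftw.symm.dvd.trans hwdvd
    have : f t ^ (r t + 1) ∣ π := by
      rw [hh, pow_succ]
      exact mul_dvd_mul (Finset.dvd_prod_of_mem (fun p => f p ^ r p) (Finset.mem_univ t)) hfth
    exact (hr t).2 this
  have hhone : h = 1 := by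
    obtain ⟨c, hc, hch⟩ := Polynomial.isUnit_iff.mp hunit
    have hlc : π.leadingCoeff = (∏ p, f p ^ r p).leadingCoeff * h.leadingCoeff := by
      rw [hh, Polynomial.leadingCoeff_mul]
    rw [hπmonic.leadingCoeff, hprodmonic.leadingCoeff, one_mul] at hlc
    rw [← hch, Polynomial.leadingCoeff_C] at hlc
    rw [← hch, ← hlc, _root_.map_one]
  have hπeq : π = ∏ p, f p ^ r p := by rw [hh, hhone, mul_one]
  refine ⟨hπeq, fun p => ?_⟩
  by_contra hc
  push_neg at hc
  have h1 : f p ^ (m p + 1) ∣ ∏ t, f t ^ m t :=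
    dvd_trans (pow_dvd_pow (f p) hc) (dvd_trans (hr p).1 hdvd)
  rw [← Finset.prod_erase_mul Finset.univ _ (Finset.mem_univ p), pow_succ'] at h1
  have h2 : f p ∣ ∏ t ∈ Finset.univ.erase p, f t ^ m t :=
    (mul_dvd_mul_iff_right (pow_ne_zero (m p) (hfne p))).mp h1
  obtain ⟨t, ht, hft⟩ := (hprime p).exists_mem_finset_dvd h2
  exact hnd p t (Finset.ne_of_mem_erase ht).symm ((hprime p).dvd_of_dvd_pow hft)

theorem exists_good_projection_vector
    (K : Type*) [Field K] [Infinite K] (n q : ℕ)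
    (A : Matrix (Fin n) (Fin n) K)
    (f : Fin q → K[X]) (m : Fin q → ℕ)
    (hfmonic : ∀ p, (f p).Monic) (hfirr : ∀ p, Irreducible (f p))
    (hfdist : Function.Injective f) (hm : ∀ p, 1 ≤ m p)
    (hfact : A.charpoly = ∏ p, (f p) ^ (m p))
    (g : Fin q → K[X]) (hg : ∀ p, g p * (f p) ^ (m p) = A.charpoly)
    (π : Fin n → K[X]) (hπmonic : ∀ j, (π j).Monic)
    (hπmin : ∀ j, ∀ p : K[X],
      (Polynomial.aeval A p).mulVec (Pi.single j 1) = 0 ↔ π j ∣ p)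
    (r : Fin n → Fin q → ℕ)
    (hr : ∀ j p, (f p) ^ (r j p) ∣ π j ∧ ¬ (f p) ^ (r j p + 1) ∣ π j) :
    ∃ u : Fin n → K,
      (∀ j p, 1 ≤ r j p →
        Matrix.vecMul u
          (Polynomial.aeval A (g p) *
            (Polynomial.aeval A (f p)) ^ (r j p - 1)) j ≠ 0) ∧
      (∀ j p, IsLeast {k : ℕ |
        Matrix.vecMul u
          (Polynomial.aeval A (g p) *
            (Polynomial.aeval A (f p)) ^ k) j = 0} (r j p)) ∧
      (∀ j, π j = ∏ p, (f p) ^ (r j p)) := by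
  classical
  have hfne : ∀ p, f p ≠ 0 := fun p => (hfmonic p).ne_zero
  have hprime : ∀ p, Prime (f p) := fun p => (hfirr p).prime
  have hnd : ∀ p t : Fin q, p ≠ t → ¬ f p ∣ f t := by
    intro p t hpt hd
    exact hpt (hfdist (Polynomial.eq_of_monic_of_associated (hfmonic p) (hfmonic t)
      ((hfirr p).associated_of_dvd (hfirr t) hd)))
  -- π j divides the characteristic polynomial
  have hπdvd : ∀ j, π j ∣ ∏ p, f p ^ m p := by
    intro j
    rw [← hfact]
    exact (hπmin j _).mp (by rw [Matrix.aeval_self_charpoly, Matrix.zero_mulVec])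
  have hstruct : ∀ j, π j = ∏ p, f p ^ r j p ∧ ∀ p, r j p ≤ m p := fun j =>
    pi_eq_prod_pows f hfmonic hfirr hfdist (π j) (hπmonic j) m (hπdvd j) (r j) (hr j)
  -- identify g p
  have hgp : ∀ p, g p = ∏ t ∈ Finset.univ.erase p, f t ^ m t := by
    intro p
    have h1 := hg p
    rw [hfact, ← Finset.prod_erase_mul Finset.univ _ (Finset.mem_univ p)] at h1
    exact mul_right_cancel₀ (pow_ne_zero (m p) (hfne p)) h1
  -- divisibility criterion
  have hdvd_iff : ∀ j p k, π j ∣ g p * f p ^ k ↔ r j p ≤ k := by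
    intro j p k
    constructor
    · intro hd
      by_contra hk
      push_neg at hk
      have h1 : f p ^ (k + 1) ∣ g p * f p ^ k :=
        dvd_trans (pow_dvd_pow (f p) hk) (dvd_trans (hr j p).1 hd)
      rw [pow_succ, mul_comm (f p ^ k) (f p)] at h1
      have h2 : f p ∣ g p := (mul_dvd_mul_iff_right (pow_ne_zero k (hfne p))).mp h1
      rw [hgp p] at h2
      obtain ⟨t, ht, hft⟩ := (hprime p).exists_mem_finset_dvd h2
      exact hnd p t (Finset.ne_of_mem_erase ht).symm ((hprime p).dvd_of_dvd_pow hft)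
    · intro hk
      rw [(hstruct j).1, ← Finset.prod_erase_mul Finset.univ _ (Finset.mem_univ p), hgp p]
      exact mul_dvd_mul
        (Finset.prod_dvd_prod_of_dvd _ _ fun t _ => pow_dvd_pow _ ((hstruct j).2 t))
        (pow_dvd_pow _ hk)
  -- the finitely many nonzero column vectors
  set S : Set (Fin n × Fin q × ℕ) := {x | x.2.2 < r x.1 x.2.1} with hS
  have hfin : Finite S := by
    set B := Finset.univ.sup (fun y : Fin n × Fin q => r y.1 y.2) with hB
    apply Finite.of_injective (f := fun x : S =>
      ((x.1.1, x.1.2.1, ⟨x.1.2.2, Nat.lt_of_lt_of_le x.2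
        ((Finset.le_sup (Finset.mem_univ (x.1.1, x.1.2.1))).trans (Nat.le_succ B))⟩) :
        Fin n × Fin q × Fin (B + 1)))
    rintro ⟨⟨j₁, p₁, k₁⟩, h₁⟩ ⟨⟨j₂, p₂, k₂⟩, h₂⟩ h
    simp only [Prod.mk.injEq, Fin.mk.injEq] at h
    simp [Prod.ext_iff, h.1, h.2.1, h.2.2]
  have hv : ∀ x : S, (Polynomial.aeval A (g x.1.2.1 * f x.1.2.1 ^ x.1.2.2)).mulVec
      (Pi.single x.1.1 1) ≠ 0 := by
    rintro ⟨⟨j, p, k⟩, hx⟩ h0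
    have := (hπmin j _).mp h0
    rw [hdvd_iff j p k] at this
    exact absurd this (Nat.not_le.mpr hx)
  obtain ⟨u, hu⟩ := exists_dot_ne_zero
    (fun x : S => (Polynomial.aeval A (g x.1.2.1 * f x.1.2.1 ^ x.1.2.2)).mulVec
      (Pi.single x.1.1 1)) hv
  -- rewriting the matrix entry
  have hentry : ∀ j p k, Matrix.vecMul u
      (Polynomial.aeval A (g p) * (Polynomial.aeval A (f p)) ^ k) j
      = u ⬝ᵥ (Polynomial.aeval A (g p * f p ^ k)).mulVec (Pi.single j 1) := by
    intro j p k
    rw [_root_.map_mul, map_pow, Matrix.mulVec_single_one]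
    simp [Matrix.vecMul, dotProduct, Matrix.transpose_apply]
  refine ⟨u, ?_, ?_, fun j => (hstruct j).1⟩
  · intro j p h1
    rw [hentry]
    exact hu ⟨(j, p, r j p - 1), Nat.sub_lt h1 one_pos⟩
  · intro j p
    constructor
    · show Matrix.vecMul u _ j = 0
      rw [hentry]
      have hz : (Polynomial.aeval A (g p * f p ^ r j p)).mulVec (Pi.single j 1) = 0 :=
        (hπmin j _).mpr ((hdvd_iff j p (r j p)).mpr le_rfl)
      rw [hz, dotProduct_zero]
    · intro k hk
      by_contra hlt
      push_neg at hlt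
      have h0 : Matrix.vecMul u
          (Polynomial.aeval A (g p) * (Polynomial.aeval A (f p)) ^ k) j = 0 := hk
      rw [hentry] at h0
      exact hu ⟨(j, p, k), hlt⟩ h0
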